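/- In the case k = 3, j = 2: if a 2-configuration A_0 is contagious on K_n^3 with infection threshold r (n ≥ 2r+1), then |A_0| ≥ (1/4)((r+1)^2 − 1_{r even}), where 1_{r even} is 1 if r is even and 0 otherwise. -/

import Mathlib

open Finset

open Classical in
noncomputable def bootStep (V : Finset ℕ) (E : Finset (Finset ℕ)) (j r : ℕ)
    (A : Finset (Finset ℕ)) : Finset (Finset ℕ) :=
  A ∪ (V.powersetCard j).filter (fun J =>
    ∃ K : Fin r → Finset ℕ, ∃ Js : Fin r → Finset ℕ,
      Function.Injective K ∧ Function.Injective Js ∧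
      ∀ i : Fin r, K i ∈ E ∧ Js i ∈ A ∧ Js i ∪ J ⊆ K i)

/-- The infected sets at time `t` of the bootstrap percolation process on a hypergraph
with vertex set `V`, edge set `E`, evolving on `j`-sets with infection threshold `r`. -/
noncomputable def bootProc (V : Finset ℕ) (E : Finset (Finset ℕ)) (j r : ℕ)
    (A0 : Finset (Finset ℕ)) (t : ℕ) : Finset (Finset ℕ) :=
  (bootStep V E j r)^[t] A0

/-- The process on the complete `k`-uniform hypergraph on `V`. -/
noncomputable def compProc (V : Finset ℕ) (k j r : ℕ)
    (A0 : Finset (Finset ℕ)) (t : ℕ) : Finset (Finset ℕ) :=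
  bootProc V (V.powersetCard k) j r A0 t

/-- `A0` is contagious: eventually all `j`-sets of `V` are infected. -/
def Percolates (V : Finset ℕ) (k j r : ℕ) (A0 : Finset (Finset ℕ)) : Prop :=
  ∃ t, compProc V k j r A0 t = V.powersetCard j

/-- `ℓ_n(k,j,r)`: minimum size of a contagious `j`-configuration in `K_n^k`. -/
noncomputable def ellMin (n k j r : ℕ) : ℕ :=
  sInf {m | ∃ A0 : Finset (Finset ℕ), A0 ⊆ (range n).powersetCard j ∧
    A0.card = m ∧ Percolates (range n) k j r A0}

open Classical in
/-- The extension set of a `(k-1)`-set `J` with respect to configuration `C` in the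
complete `k`-uniform hypergraph on `V`. -/
noncomputable def extSet (V : Finset ℕ) (k : ℕ) (C : Finset (Finset ℕ))
    (J : Finset ℕ) : Finset ℕ :=
  V.filter (fun v => ∃ J' ∈ C, J' ≠ J ∧ J' ⊆ insert v J ∧ insert v J ∈ V.powersetCard k)

lemma compProc_succ (V : Finset ℕ) (k j r : ℕ) (A0 : Finset (Finset ℕ)) (t : ℕ) :
    compProc V k j r A0 (t + 1) = bootStep V (V.powersetCard k) j r (compProc V k j r A0 t) :=
  Function.iterate_succ_apply' _ _ _

lemma compProc_zero (V : Finset ℕ) (k j r : ℕ) (A0 : Finset (Finset ℕ)) :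
    compProc V k j r A0 0 = A0 := rfl

lemma subset_bootStep (V : Finset ℕ) (E : Finset (Finset ℕ)) (j r : ℕ)
    (A : Finset (Finset ℕ)) : A ⊆ bootStep V E j r A := by
  unfold bootStep; exact subset_union_left

lemma compProc_subset (V : Finset ℕ) (k j r : ℕ) (A0 : Finset (Finset ℕ))
    (hA0 : A0 ⊆ V.powersetCard j) (t : ℕ) :
    compProc V k j r A0 t ⊆ V.powersetCard j := by
  classical
  induction t with
  | zero => exact hA0
  | succ t ih =>
    rw [compProc_succ]
    unfold bootStep
    exact union_subset ih (filter_subset _ _)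

lemma coupling (V : Finset ℕ) (r : ℕ) (A0 : Finset (Finset ℕ)) (J0 : Finset ℕ)
    (hJ0 : J0.card = 2) (t : ℕ) :
    (compProc V 3 2 r A0 t).filter (fun s => s ⊆ V \ J0) ⊆
      compProc (V \ J0) 3 2 (r - 2) (A0.filter (fun s => s ⊆ V \ J0)) t := by
  classical
  induction t with
  | zero => exact Finset.Subset.refl _
  | succ t ih =>
    intro J hJ
    rw [mem_filter] at hJ
    obtain ⟨hJstep, hJV'⟩ := hJ
    rw [compProc_succ] at hJstep
    rw [compProc_succ]
    unfold bootStep at hJstep ⊢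
    rw [mem_union] at hJstep
    rcases hJstep with h | h
    · exact mem_union_left _ (ih (mem_filter.mpr ⟨h, hJV'⟩))
    · rw [mem_filter] at h
      obtain ⟨hJ2, K, Js, hKinj, hJsinj, hcond⟩ := h
      obtain ⟨hJV, hJcard⟩ := mem_powersetCard.mp hJ2
      classical
      set Good : Finset (Fin r) := univ.filter (fun i => K i ⊆ V \ J0) with hGooddef
      have hbadmem : ∀ i ∈ univ \ Good, K i ∈ J0.image (fun w => insert w J) := by
        intro i hi
        rw [mem_sdiff, hGooddef, mem_filter] at hi
        have hnot : ¬ K i ⊆ V \ J0 := fun hc => hi.2 ⟨mem_univ i, hc⟩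
        have hKV : K i ⊆ V := (mem_powersetCard.mp (hcond i).1).1
        have hK3 : (K i).card = 3 := (mem_powersetCard.mp (hcond i).1).2
        obtain ⟨x, hxK, hxn⟩ := not_subset.mp hnot
        have hxJ0 : x ∈ J0 := by
          by_contra hx
          exact hxn (mem_sdiff.mpr ⟨hKV hxK, hx⟩)
        have hJK : J ⊆ K i := subset_trans subset_union_right (hcond i).2.2
        have hxJ : x ∉ J := fun hx => (mem_sdiff.mp (hJV' hx)).2 hxJ0
        have hsub : insert x J ⊆ K i := insert_subset hxK hJK
        have hcards : (K i).card ≤ (insert x J).card := by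
          rw [card_insert_of_notMem hxJ, hJcard, hK3]
        rw [mem_image]
        exact ⟨x, hxJ0, eq_of_subset_of_card_le hsub hcards⟩
      have hbad : (univ \ Good).card ≤ 2 := by
        calc (univ \ Good).card ≤ (J0.image (fun w => insert w J)).card :=
              card_le_card_of_injOn K hbadmem (fun a _ b _ h => hKinj h)
          _ ≤ J0.card := card_image_le
          _ = 2 := hJ0
      have hGoodcard : r - 2 ≤ Good.card := by
        have h1 : (univ \ Good).card = Fintype.card (Fin r) - Good.card := by
          rw [card_sdiff_of_subset (subset_univ _), card_univ]
        have h2 : Good.card ≤ Fintype.card (Fin r) := by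
          rw [← card_univ]; exact card_le_card (subset_univ _)
        rw [Fintype.card_fin] at h1 h2
        omega
      obtain ⟨G', hG'sub, hG'card⟩ := exists_subset_card_eq hGoodcard
      let e := G'.orderIsoOfFin hG'card
      have hmemGood : ∀ i : Fin (r - 2), K (e i) ⊆ V \ J0 := by
        intro i
        have h := hG'sub (e i).2
        rw [hGooddef, mem_filter] at h
        exact h.2
      refine mem_union_right _ ?_
      rw [mem_filter]
      refine ⟨mem_powersetCard.mpr ⟨hJV', hJcard⟩,
        (fun i => K (e i)), (fun i => Js (e i)), ?_, ?_, ?_⟩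
      · intro a b hab
        exact e.injective (Subtype.val_injective (hKinj hab))
      · intro a b hab
        exact e.injective (Subtype.val_injective (hJsinj hab))
      · intro i
        refine ⟨?_, ?_, (hcond (e i)).2.2⟩
        · exact mem_powersetCard.mpr ⟨hmemGood i, (mem_powersetCard.mp (hcond (e i)).1).2⟩
        · apply ih
          rw [mem_filter]
          exact ⟨(hcond (e i)).2.1,
            subset_trans (subset_trans subset_union_left (hcond (e i)).2.2) (hmemGood i)⟩

lemma small_perc (V : Finset ℕ) (r : ℕ) (A0 : Finset (Finset ℕ)) (J0 : Finset ℕ)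
    (hJ0card : J0.card = 2)
    (hA0 : A0 ⊆ V.powersetCard 2)
    (hperc : Percolates V 3 2 r A0) :
    Percolates (V \ J0) 3 2 (r - 2) (A0.filter (fun s => s ⊆ V \ J0)) := by
  obtain ⟨T, hT⟩ := hperc
  refine ⟨T, Finset.Subset.antisymm ?_ ?_⟩
  · apply compProc_subset
    intro s hs
    rw [mem_filter] at hs
    exact mem_powersetCard.mpr ⟨hs.2, (mem_powersetCard.mp (hA0 hs.1)).2⟩
  · intro J hJ
    obtain ⟨hJs, hJc⟩ := mem_powersetCard.mp hJ
    apply coupling V r A0 J0 hJ0card T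
    rw [mem_filter, hT]
    exact ⟨mem_powersetCard.mpr ⟨subset_trans hJs sdiff_subset, hJc⟩, hJs⟩

lemma exists_new (V : Finset ℕ) (r : ℕ) (A0 : Finset (Finset ℕ))
    (hperc : Percolates V 3 2 r A0) (hne : A0 ≠ V.powersetCard 2) :
    ∃ J ∈ V.powersetCard 2, J ∉ A0 ∧
      ∃ K Js : Fin r → Finset ℕ, Function.Injective K ∧ Function.Injective Js ∧
        ∀ i, K i ∈ V.powersetCard 3 ∧ Js i ∈ A0 ∧ Js i ∪ J ⊆ K i := by
  classical
  obtain ⟨T, hT⟩ := hperc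
  have hex : ∃ t, compProc V 3 2 r A0 t ≠ A0 := ⟨T, by rw [hT]; exact fun h => hne h.symm⟩
  have ht : compProc V 3 2 r A0 (Nat.find hex) ≠ A0 := Nat.find_spec hex
  have ht0 : Nat.find hex ≠ 0 := by
    intro h; rw [h] at ht; exact ht (compProc_zero V 3 2 r A0)
  obtain ⟨s, hs⟩ : ∃ s, Nat.find hex = s + 1 := ⟨Nat.find hex - 1, by omega⟩
  have hsA : compProc V 3 2 r A0 s = A0 := not_not.mp (Nat.find_min hex (by omega))
  rw [hs, compProc_succ, hsA] at ht
  have hsup : A0 ⊆ bootStep V (V.powersetCard 3) 2 r A0 := subset_bootStep _ _ _ _ _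
  have hns : ¬ bootStep V (V.powersetCard 3) 2 r A0 ⊆ A0 :=
    fun h => ht (Finset.Subset.antisymm h hsup)
  obtain ⟨J, hJmem, hJnot⟩ := not_subset.mp hns
  unfold bootStep at hJmem
  rw [mem_union] at hJmem
  rcases hJmem with h | h
  · exact absurd h hJnot
  · rw [mem_filter] at h
    exact ⟨J, h.1, hJnot, h.2⟩

lemma count_lemma (V : Finset ℕ) (r : ℕ) (A0 : Finset (Finset ℕ)) (J : Finset ℕ)
    (hA0 : A0 ⊆ V.powersetCard 2) (hJ2 : J.card = 2)
    (K Js : Fin r → Finset ℕ) (hJsinj : Function.Injective Js)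
    (hcond : ∀ i, K i ∈ V.powersetCard 3 ∧ Js i ∈ A0 ∧ Js i ∪ J ⊆ K i) :
    r + (A0.filter (fun s => s ⊆ V \ J)).card ≤ A0.card := by
  classical
  have himg : (univ : Finset (Fin r)).image Js ⊆ A0.filter (fun s => ¬ s ⊆ V \ J) := by
    intro s hs
    rw [mem_image] at hs
    obtain ⟨i, -, rfl⟩ := hs
    rw [mem_filter]
    refine ⟨(hcond i).2.1, ?_⟩
    have h1 : (Js i).card = 2 := (mem_powersetCard.mp (hA0 (hcond i).2.1)).2
    have h3 : (K i).card = 3 := (mem_powersetCard.mp (hcond i).1).2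
    have hu : (Js i ∪ J).card ≤ 3 := by
      rw [← h3]; exact card_le_card (hcond i).2.2
    have hic := card_union_add_card_inter (Js i) J
    obtain ⟨x, hx⟩ := card_pos.mp (show 0 < (Js i ∩ J).card by omega)
    rw [mem_inter] at hx
    intro hsub
    exact (mem_sdiff.mp (hsub hx.1)).2 hx.2
  have hcard1 : r ≤ (A0.filter (fun s => ¬ s ⊆ V \ J)).card := by
    calc r = ((univ : Finset (Fin r)).image Js).card := by
          rw [card_image_of_injective _ hJsinj, card_univ, Fintype.card_fin]
      _ ≤ _ := card_le_card himg
  have hsplit := card_filter_add_card_filter_not (s := A0) (p := fun s => s ⊆ V \ J)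
  omega

lemma main_lemma : ∀ r : ℕ, ∀ V : Finset ℕ, ∀ A0 : Finset (Finset ℕ),
    2 * r + 1 ≤ V.card → A0 ⊆ V.powersetCard 2 → Percolates V 3 2 r A0 →
    (r + 1) ^ 2 - (if Even r then 1 else 0) ≤ 4 * A0.card := by
  intro r
  induction r using Nat.strong_induction_on with
  | _ r IH =>
    intro V A0 hn hA0 hperc
    by_cases hfull : A0 = V.powersetCard 2
    · have hcard : A0.card = V.card.choose 2 := by rw [hfull, card_powersetCard]
      have h1 : (2 * r + 1).choose 2 ≤ V.card.choose 2 := Nat.choose_le_choose _ hn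
      have h2 : (2 * r + 1).choose 2 = (2 * r + 1) * r := by
        rw [Nat.choose_two_right]
        have h : 2 * r + 1 - 1 = 2 * r := by omega
        rw [h, show (2 * r + 1) * (2 * r) = ((2 * r + 1) * r) * 2 by ring,
          Nat.mul_div_cancel _ (by norm_num)]
      have hge : (2 * r + 1) * r ≤ A0.card := by rw [hcard]; omega
      have key : (r + 1) ^ 2 - (if Even r then 1 else 0) ≤ 4 * ((2 * r + 1) * r) := by
        rcases Nat.eq_zero_or_pos r with rfl | hr
        · norm_num
        · have h : (r + 1) ^ 2 ≤ 4 * ((2 * r + 1) * r) := by nlinarith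
          omega
      calc (r + 1) ^ 2 - (if Even r then 1 else 0) ≤ 4 * ((2 * r + 1) * r) := key
        _ ≤ 4 * A0.card := Nat.mul_le_mul_left 4 hge
    · obtain ⟨J, hJmem, hJnot, K, Js, hKinj, hJsinj, hcond⟩ := exists_new V r A0 hperc hfull
      obtain ⟨hJV, hJcard⟩ := mem_powersetCard.mp hJmem
      have hcount := count_lemma V r A0 J hA0 hJcard K Js hJsinj hcond
      rcases Nat.lt_or_ge r 2 with hr | hr
      · interval_cases r
        · norm_num
        · have h1 : 1 ≤ A0.card := by omega
          have he : (1 + 1) ^ 2 - (if Even 1 then 1 else 0) = 4 := by decide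
          rw [he]; omega
      · obtain ⟨m, rfl⟩ : ∃ m, r = m + 2 := ⟨r - 2, by omega⟩
        have hsmall := small_perc V (m + 2) A0 J hJcard hA0 hperc
        rw [Nat.add_sub_cancel] at hsmall
        have hVJ : 2 * m + 1 ≤ (V \ J).card := by
          rw [card_sdiff_of_subset hJV, hJcard]; omega
        have hsub' : A0.filter (fun s => s ⊆ V \ J) ⊆ (V \ J).powersetCard 2 := by
          intro s hs; rw [mem_filter] at hs
          exact mem_powersetCard.mpr ⟨hs.2, (mem_powersetCard.mp (hA0 hs.1)).2⟩
        have hIH := IH m (by omega) (V \ J) (A0.filter (fun s => s ⊆ V \ J)) hVJ hsub' hsmall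
        have heven : Even (m + 2) ↔ Even m := by simp [Nat.even_add_one]
        rw [if_congr heven rfl rfl]
        have h1 : (m + 2 + 1) ^ 2 = (m + 1) ^ 2 + (4 * m + 8) := by ring
        have h2 : 1 ≤ (m + 1) ^ 2 := Nat.one_le_pow _ _ (by omega)
        rw [h1]
        by_cases hE : Even m
        · rw [if_pos hE] at hIH ⊢
          obtain ⟨a, ha⟩ : ∃ a, (m + 1) ^ 2 = a := ⟨_, rfl⟩
          rw [ha] at hIH h2 ⊢
          omega
        · rw [if_neg hE] at hIH ⊢
          obtain ⟨a, ha⟩ : ∃ a, (m + 1) ^ 2 = a := ⟨_, rfl⟩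
          rw [ha] at hIH h2 ⊢
          omega

theorem stmt9 (n r : ℕ) (hr : 1 ≤ r) (hn : 2 * r + 1 ≤ n)
    (A0 : Finset (Finset ℕ)) (hA0 : A0 ⊆ (range n).powersetCard 2)
    (hperc : Percolates (range n) 3 2 r A0) :
    (r + 1) ^ 2 - (if Even r then 1 else 0) ≤ 4 * A0.card :=
  main_lemma r (range n) A0 (by rw [card_range]; exact hn) hA0 hperc
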